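/- Let q be an odd prime power. The number of elements of SL₂(F_q) that are not squares (i.e., not of the form h² for any h ∈ SL₂(F_q)) is at least (1/4)·|SL₂(F_q)| = (1/4)·(q-1)q(q+1). -/

import Mathlib

open Matrix

section Aux

variable {F : Type*} [Field F] [Fintype F]

private lemma two_ne_zero_of_odd_card (hq : Odd (Fintype.card F)) : (2 : F) ≠ 0 := by
  intro h2
  obtain ⟨n, hp, hcard⟩ := FiniteField.card F (ringChar F)
  have hdvd : ringChar F ∣ 2 :=
    (CharP.cast_eq_zero_iff F (ringChar F) 2).mp (by exact_mod_cast h2)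
  have hp2 : ringChar F = 2 := (Nat.prime_dvd_prime_iff_eq hp Nat.prime_two).mp hdvd
  rw [hcard, hp2] at hq
  exact (Nat.not_even_iff_odd.2 hq)
    (Nat.even_pow.mpr ⟨even_iff_two_dvd.mpr dvd_rfl, n.pos.ne'⟩)

private lemma card_SL2 :
    Nat.card (Matrix.SpecialLinearGroup (Fin 2) F) =
      (Fintype.card F - 1) * Fintype.card F * (Fintype.card F + 1) := by
  classical
  set q := Fintype.card F with hq
  -- det : GL → Fˣ is surjective with kernel ≃ SL
  have hsurj : Function.Surjective (Matrix.GeneralLinearGroup.det (n := Fin 2) (R := F)) := by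
    intro u
    refine ⟨Matrix.GeneralLinearGroup.mkOfDetNeZero (Matrix.diagonal ![(u : F), 1]) ?_, ?_⟩
    · simp [Matrix.det_diagonal]
    · ext
      show Matrix.det (Matrix.diagonal ![(u : F), 1]) = (u : F)
      simp [Matrix.det_diagonal]
  have hker : Nat.card ((Matrix.GeneralLinearGroup.det (n := Fin 2) (R := F)).ker) =
      Nat.card (Matrix.SpecialLinearGroup (Fin 2) F) := by
    refine Nat.card_congr (Equiv.symm ?_)
    refine ⟨fun g => ⟨g, g.coeToGL_det⟩, fun A => ⟨A.1.1, ?_⟩, fun g => rfl, fun A => Subtype.ext (Units.ext rfl)⟩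
    · have : Matrix.GeneralLinearGroup.det A.1 = 1 := A.2
      have := congrArg Units.val this
      rwa [Matrix.GeneralLinearGroup.val_det_apply] at this
  have hquot := Subgroup.card_eq_card_quotient_mul_card_subgroup
    (Matrix.GeneralLinearGroup.det (n := Fin 2) (R := F)).ker
  have hquot2 : Nat.card ((GL (Fin 2) F) ⧸ (Matrix.GeneralLinearGroup.det (n := Fin 2) (R := F)).ker)
      = Nat.card Fˣ := Nat.card_congr (QuotientGroup.quotientKerEquivOfSurjective _ hsurj).toEquiv
  have hGL : Nat.card (GL (Fin 2) F) = (q ^ 2 - 1) * (q ^ 2 - q) := by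
    rw [Matrix.card_GL_field]
    simp [Fin.prod_univ_two]
    rfl
  have hFu : Nat.card Fˣ = q - 1 := by
    rw [Nat.card_eq_fintype_card, Fintype.card_units]
  have hq2 : 2 ≤ q := Fintype.one_lt_card
  obtain ⟨a, ha⟩ : ∃ a, q = a + 1 := ⟨q - 1, by omega⟩
  have e1 : q ^ 2 - 1 = a * (a + 2) := by
    have : q ^ 2 = a * (a + 2) + 1 := by rw [ha]; ring
    omega
  have e2 : q ^ 2 - q = a * (a + 1) := by
    have : q ^ 2 = a * (a + 1) + q := by rw [ha]; ring
    omega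
  have key : a * Nat.card (Matrix.SpecialLinearGroup (Fin 2) F)
      = a * (a * q * (q + 1)) := by
    have h := hquot
    rw [hquot2, hker, hGL, hFu, e1, e2] at h
    have ha1 : q - 1 = a := by omega
    rw [ha1] at h
    rw [← h, ha]
    ring
  rw [show q - 1 = a from by omega]
  exact Nat.eq_of_mul_eq_mul_left (by omega) key

end Aux

/-- For `q` odd, at least a quarter of the elements of `SL₂(F_q)` are non-squares. -/
theorem stmt5 {F : Type*} [Field F] [Fintype F] (hq : Odd (Fintype.card F)) :
    (Fintype.card F - 1) * Fintype.card F * (Fintype.card F + 1) ≤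
      4 * ({g : Matrix.SpecialLinearGroup (Fin 2) F |
        ¬ ∃ h : Matrix.SpecialLinearGroup (Fin 2) F, g = h ^ 2}).ncard := by
  classical
  haveI : Fact (Even (Fintype.card (Fin 2))) := ⟨by simp⟩
  set G := Matrix.SpecialLinearGroup (Fin 2) F
  set S : Set G := {g : G | ∃ h : G, g = h ^ 2} with hS
  set T : Set G := {g : G | ¬ ∃ h : G, g = h ^ 2} with hT
  have hTc : T = Sᶜ := rfl
  -- each square has at least two square roots
  have hkey : 2 * S.ncard ≤ Nat.card G := by
    have : S.ncard = Nat.card S := (Nat.card_coe_set_eq S).symm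
    rw [this]
    have : 2 * Nat.card S = Nat.card (S × Bool) := by
      rw [Nat.card_prod, Nat.card_eq_fintype_card (α := Bool), Fintype.card_bool, mul_comm]
    rw [this]
    refine Nat.card_le_card_of_injective
      (fun p => if p.2 then p.1.2.choose else -p.1.2.choose) ?_
    rintro ⟨⟨s, hs⟩, b⟩ ⟨⟨t, ht⟩, c⟩ heq
    have hs2 : s = hs.choose ^ 2 := hs.choose_spec
    have ht2 : t = ht.choose ^ 2 := ht.choose_spec
    simp only at heq
    have epow : ∀ (x : G) (d : Bool), (if d then x else -x) ^ 2 = x ^ 2 := by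
      intro x d; cases d
      · show (-x) ^ 2 = x ^ 2
        apply Matrix.SpecialLinearGroup.ext
        intro i j
        rw [Matrix.SpecialLinearGroup.coe_pow, Matrix.SpecialLinearGroup.coe_pow,
          Matrix.SpecialLinearGroup.coe_neg, neg_sq]
      · simp
    have hsq : s = t := by
      calc s = hs.choose ^ 2 := hs2
        _ = (if b then hs.choose else -hs.choose) ^ 2 := (epow _ _).symm
        _ = (if c then ht.choose else -ht.choose) ^ 2 := by rw [heq]
        _ = ht.choose ^ 2 := epow _ _
        _ = t := ht2.symm
    subst hsq
    have hchoose : hs.choose = ht.choose := rfl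
    have hne : hs.choose ≠ -hs.choose := by
      intro hcontra
      have hmat : (hs.choose : Matrix (Fin 2) (Fin 2) F)
          = -(hs.choose : Matrix (Fin 2) (Fin 2) F) := by
        rw [← Matrix.SpecialLinearGroup.coe_neg]
        exact congrArg _ hcontra
      have hzero : (hs.choose : Matrix (Fin 2) (Fin 2) F) = 0 := by
        ext i j
        have := congrFun (congrFun hmat i) j
        simp only [Matrix.neg_apply] at this
        have h2 : (2 : F) * (hs.choose : Matrix (Fin 2) (Fin 2) F) i j = 0 := by
          rw [two_mul]
          linear_combination this
        rcases mul_eq_zero.mp h2 with h | h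
        · exact absurd h (two_ne_zero_of_odd_card hq)
        · simpa using h
      have hdet : Matrix.det (hs.choose : Matrix (Fin 2) (Fin 2) F) = 1 := hs.choose.2
      rw [hzero, Matrix.det_zero] at hdet
      exact absurd hdet.symm one_ne_zero
    rw [← hchoose] at heq
    have hbc : b = c := by
      cases b <;> cases c
      · rfl
      · rw [if_neg (by simp), if_pos rfl] at heq
        exact absurd heq.symm hne
      · rw [if_pos rfl, if_neg (by simp)] at heq
        exact absurd heq hne
      · rfl
    subst hbc
    exact Prod.ext (Subtype.ext rfl) rfl
  have hcompl : S.ncard + T.ncard = Nat.card G := by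
    rw [hTc]
    exact Set.ncard_add_ncard_compl S
  have hcard : Nat.card G = (Fintype.card F - 1) * Fintype.card F * (Fintype.card F + 1) :=
    card_SL2
  omega
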